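/- Let d, ℓ, q be positive integers and let A be a nonempty finite subset of ℕ such that d > ℓq, min A > ℓq, and any two elements of A are congruent modulo d. Then the set ({0, q, 2q, …, ℓq}) ∪ A is NOT an atom of P_fin,0(ℕ) if and only if A = {(ℓ+k)q} for some integer k with 1 ≤ k ≤ ⌈ℓ/2⌉. -/
import Mathlib


open Pointwise

/-- `A` is an atom of the restricted power monoid `P_fin,0(ℕ)` of finite subsets of `ℕ`
containing `0`, under set addition. -/
def IsAtom0 (A : Finset ℕ) : Prop :=
  0 ∈ A ∧ A ≠ {0} ∧
    ∀ X Y : Finset ℕ, 0 ∈ X → 0 ∈ Y → A = X + Y → X = {0} ∨ Y = {0}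

/-- Let `d, ℓ, q` be positive integers and `A` a nonempty finite subset of `ℕ` with
`min A > ℓq`, `d > ℓq`, and all elements of `A` congruent modulo `d`. Then
`{0, q, 2q, …, ℓq} ∪ A` is not an atom of `P_fin,0(ℕ)` iff `A = {(ℓ+k)q}` for some
`1 ≤ k ≤ ⌈ℓ/2⌉`. -/
theorem stmt_13 (d ℓ q : ℕ) (hd : 0 < d) (hℓ : 0 < ℓ) (hq : 0 < q)
    (A : Finset ℕ) (hA : A.Nonempty)
    (hdq : ℓ * q < d) (hmin : ∀ a ∈ A, ℓ * q < a)
    (hcong : ∀ a ∈ A, ∀ b ∈ A, a % d = b % d) :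
    ¬ IsAtom0 ((Finset.range (ℓ + 1)).image (fun i => q * i) ∪ A) ↔
      ∃ k : ℕ, 1 ≤ k ∧ k ≤ (ℓ + 1) / 2 ∧ A = {(ℓ + k) * q} := by
  set L : Finset ℕ := (Finset.range (ℓ + 1)).image (fun i => q * i) with hLdef
  have hmemL : ∀ n : ℕ, n ∈ L ↔ ∃ i, i ≤ ℓ ∧ q * i = n := by
    intro n
    simp [hLdef, Finset.mem_image, Finset.mem_range, Nat.lt_succ_iff]
  have h0L : (0:ℕ) ∈ L := (hmemL 0).2 ⟨0, Nat.zero_le _, by ring⟩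
  have h0S : (0:ℕ) ∈ L ∪ A := Finset.mem_union_left _ h0L
  have hmemS : ∀ s ∈ L ∪ A, (∃ i, i ≤ ℓ ∧ q * i = s) ∨ s ∈ A := by
    intro s hs
    rcases Finset.mem_union.1 hs with h | h
    · exact Or.inl ((hmemL s).1 h)
    · exact Or.inr h
  have hbig : ∀ s ∈ L ∪ A, ℓ * q < s → s ∈ A := by
    intro s hs hlt
    rcases hmemS s hs with ⟨i, hi, rfl⟩ | h'
    · exfalso
      have h1 : q * i ≤ q * ℓ := Nat.mul_le_mul_left q hi
      have h2 : q * ℓ = ℓ * q := mul_comm q ℓ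
      omega
    · exact h'
  have hdvd : ∀ a ∈ A, ∀ y : ℕ, a + y ∈ A → d ∣ y := by
    intro a ha y hy
    have h1 : Nat.ModEq d (a + 0) (a + y) := by
      rw [Nat.add_zero]; exact hcong a ha (a + y) hy
    have h2 : Nat.ModEq d 0 y := Nat.ModEq.add_left_cancel' a h1
    exact (Nat.modEq_zero_iff_dvd).1 h2.symm
  constructor
  · -- forward direction
    intro hna
    obtain ⟨a0, ha0⟩ := hA
    have ha0pos : ℓ * q < a0 := hmin a0 ha0
    have hSne : L ∪ A ≠ {0} := by
      intro h
      have : a0 ∈ ({0} : Finset ℕ) := h ▸ Finset.mem_union_right _ ha0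
      have := Finset.mem_singleton.1 this
      have hql : q ≤ ℓ * q := Nat.le_mul_of_pos_left q hℓ
      omega
    have hR : ¬ ∀ X Y : Finset ℕ, 0 ∈ X → 0 ∈ Y → L ∪ A = X + Y →
        X = {0} ∨ Y = {0} := fun h => hna ⟨h0S, hSne, h⟩
    push_neg at hR
    obtain ⟨X, Y, hX0, hY0, hSXY, hXne, hYne⟩ := hR
    have hXS : ∀ x ∈ X, x ∈ L ∪ A := by
      intro x hx
      have h : x + 0 ∈ X + Y := Finset.add_mem_add hx hY0
      rw [Nat.add_zero] at h
      rw [hSXY]; exact h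
    have hYS : ∀ y ∈ Y, y ∈ L ∪ A := by
      intro y hy
      have h : 0 + y ∈ X + Y := Finset.add_mem_add hX0 hy
      rw [Nat.zero_add] at h
      rw [hSXY]; exact h
    -- key lemma: if U has an element of A, then every element of V is 0 or in A
    have key : ∀ U V : Finset ℕ, 0 ∈ U → L ∪ A = U + V →
        (∃ u ∈ U, u ∈ A) → ∀ v ∈ V, v = 0 ∨ v ∈ A := by
      rintro U V hU0 hUV ⟨u, hu, huA⟩ v hv
      by_cases hvA : v ∈ A
      · exact Or.inr hvA
      left
      by_contra hvne
      have huv : u + v ∈ L ∪ A := by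
        rw [hUV]; exact Finset.add_mem_add hu hv
      have huvA : u + v ∈ A := by
        refine hbig _ huv ?_
        have := hmin u huA; omega
      have hdv : d ∣ v := hdvd u huA v huvA
      have hvS : v ∈ L ∪ A := by
        rw [hUV]
        have h : 0 + v ∈ U + V := Finset.add_mem_add hU0 hv
        rwa [Nat.zero_add] at h
      rcases hmemS v hvS with ⟨i, hi, rfl⟩ | h'
      · have h1 : q * i ≤ q * ℓ := Nat.mul_le_mul_left q hi
        have h2 : q * ℓ = ℓ * q := mul_comm q ℓ
        have h3 : d ≤ q * i := Nat.le_of_dvd (by omega) hdv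
        omega
      · exact hvA h'
    -- no element of X lies in A, and same for Y
    have noboth : (∀ v ∈ X, v = 0 ∨ v ∈ A) → (∀ v ∈ Y, v = 0 ∨ v ∈ A) → False := by
      intro hx hy
      have hqS : q ∈ L ∪ A :=
        Finset.mem_union_left _ ((hmemL q).2 ⟨1, hℓ, by ring⟩)
      rw [hSXY] at hqS
      obtain ⟨x, hxX, y, hyY, hxy⟩ := Finset.mem_add.1 hqS
      have hqle : q ≤ ℓ * q := Nat.le_mul_of_pos_left q hℓ
      rcases hx x hxX with rfl | hxA
      · rcases hy y hyY with rfl | hyA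
        · omega
        · have := hmin y hyA; omega
      · have := hmin x hxA; omega
    have hXA : ∀ x ∈ X, x ∉ A := by
      intro x hxX hxA
      have hYall : ∀ v ∈ Y, v = 0 ∨ v ∈ A := key X Y hX0 hSXY ⟨x, hxX, hxA⟩
      obtain ⟨y, hyY, hyne⟩ : ∃ y ∈ Y, y ≠ 0 := by
        by_contra h'
        push_neg at h'
        exact hYne (Finset.eq_singleton_iff_unique_mem.2 ⟨hY0, fun b hb => h' b hb⟩)
      have hyA : y ∈ A := (hYall y hyY).resolve_left hyne
      have hXall : ∀ v ∈ X, v = 0 ∨ v ∈ A :=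
        key Y X hY0 (by rw [hSXY, add_comm]) ⟨y, hyY, hyA⟩
      exact noboth hXall hYall
    have hYA : ∀ y ∈ Y, y ∉ A := by
      intro y hyY hyA
      have hXall : ∀ v ∈ X, v = 0 ∨ v ∈ A :=
        key Y X hY0 (by rw [hSXY, add_comm]) ⟨y, hyY, hyA⟩
      obtain ⟨x, hxX, hxne⟩ : ∃ x ∈ X, x ≠ 0 := by
        by_contra h'
        push_neg at h'
        exact hXne (Finset.eq_singleton_iff_unique_mem.2 ⟨hX0, fun b hb => h' b hb⟩)
      have hxA : x ∈ A := (hXall x hxX).resolve_left hxne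
      have hYall : ∀ v ∈ Y, v = 0 ∨ v ∈ A := key X Y hX0 hSXY ⟨x, hxX, hxA⟩
      exact noboth hXall hYall
    -- X and Y consist of multiples of q with index ≤ ℓ
    have hXL : ∀ x ∈ X, ∃ i, i ≤ ℓ ∧ q * i = x := fun x hx =>
      (hmemS x (hXS x hx)).resolve_right (hXA x hx)
    have hYL : ∀ y ∈ Y, ∃ i, i ≤ ℓ ∧ q * i = y := fun y hy =>
      (hmemS y (hYS y hy)).resolve_right (hYA y hy)
    -- every element of A is at most 2ℓq
    have hAbd : ∀ a ∈ A, a ≤ ℓ * q + ℓ * q := by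
      intro a ha
      have haS : a ∈ L ∪ A := Finset.mem_union_right _ ha
      rw [hSXY] at haS
      obtain ⟨x, hxX, y, hyY, hxy⟩ := Finset.mem_add.1 haS
      obtain ⟨i, hi, rfl⟩ := hXL x hxX
      obtain ⟨j, hj, rfl⟩ := hYL y hyY
      have h1 : q * i ≤ q * ℓ := Nat.mul_le_mul_left q hi
      have h2 : q * j ≤ q * ℓ := Nat.mul_le_mul_left q hj
      have h3 : q * ℓ = ℓ * q := mul_comm q ℓ
      omega
    -- A is a singleton
    have hsing : ∀ a ∈ A, ∀ b ∈ A, a = b := by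
      have half : ∀ a ∈ A, ∀ b ∈ A, a ≤ b → a = b := by
        intro a ha b hb hab
        have h1 : d ∣ b - a := (Nat.modEq_iff_dvd' hab).1 (hcong a ha b hb)
        have h2 := hmin a ha
        have h3 := hAbd b hb
        have h4 : b - a < d := by omega
        have h5 : b - a = 0 := by
          rcases Nat.eq_zero_or_pos (b - a) with h | h
          · exact h
          · have := Nat.le_of_dvd h h1; omega
        omega
      intro a ha b hb
      rcases le_total a b with h | h
      · exact half a ha b hb h
      · exact (half b hb a ha h).symm
    have hAeq : A = {a0} :=
      Finset.eq_singleton_iff_unique_mem.2 ⟨ha0, fun b hb => hsing b hb a0 ha0⟩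
    -- maxima of X and Y
    have hXneF : X.Nonempty := ⟨0, hX0⟩
    have hYneF : Y.Nonempty := ⟨0, hY0⟩
    set xm := X.max' hXneF with hxm
    set ym := Y.max' hYneF with hym
    have hxmX : xm ∈ X := X.max'_mem hXneF
    have hymY : ym ∈ Y := Y.max'_mem hYneF
    obtain ⟨u, hu, hxu⟩ := hXL xm hxmX
    obtain ⟨v, hv, hyv⟩ := hYL ym hymY
    have hxmpos : 0 < xm := by
      obtain ⟨x, hxX, hxne⟩ : ∃ x ∈ X, x ≠ 0 := by
        by_contra h'
        push_neg at h'
        exact hXne (Finset.eq_singleton_iff_unique_mem.2 ⟨hX0, fun b hb => h' b hb⟩)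
      have := X.le_max' x hxX
      omega
    have hympos : 0 < ym := by
      obtain ⟨y, hyY, hyne⟩ : ∃ y ∈ Y, y ≠ 0 := by
        by_contra h'
        push_neg at h'
        exact hYne (Finset.eq_singleton_iff_unique_mem.2 ⟨hY0, fun b hb => h' b hb⟩)
      have := Y.le_max' y hyY
      omega
    have hupos : 0 < u := by
      rcases Nat.eq_zero_or_pos u with h | h
      · subst h; simp at hxu; omega
      · exact h
    have hvpos : 0 < v := by
      rcases Nat.eq_zero_or_pos v with h | h
      · subst h; simp at hyv; omega
      · exact h
    -- xm + ym = a0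
    have hsumS : xm + ym ∈ L ∪ A := by
      rw [hSXY]; exact Finset.add_mem_add hxmX hymY
    have ha0rep : ∃ x ∈ X, ∃ y ∈ Y, x + y = a0 := by
      have : a0 ∈ L ∪ A := Finset.mem_union_right _ ha0
      rw [hSXY] at this
      exact Finset.mem_add.1 this
    have hsumbig : ℓ * q < xm + ym := by
      obtain ⟨x, hxX, y, hyY, hxy⟩ := ha0rep
      have h1 := X.le_max' x hxX
      have h2 := Y.le_max' y hyY
      omega
    have hsumA : xm + ym ∈ A := hbig _ hsumS hsumbig
    have hsum : xm + ym = a0 := hsing _ hsumA _ ha0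
    -- u + v > ℓ
    have huv : ℓ < u + v := by
      have h1 : q * ℓ < q * (u + v) := by
        rw [Nat.mul_add, hxu, hyv, hsum, mul_comm]
        exact ha0pos
      exact Nat.lt_of_mul_lt_mul_left h1
    set k := u + v - ℓ with hkdef
    have hk1 : 1 ≤ k := by omega
    have hkℓ : k ≤ ℓ := by omega
    have huk : k ≤ u := by omega
    have hvk : k ≤ v := by omega
    refine ⟨k, hk1, ?_, ?_⟩
    · -- k ≤ (ℓ+1)/2
      -- dichotomy for Y
      have dichY : ∀ y ∈ Y, y = ym ∨ xm + y ≤ ℓ * q := by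
        intro y hy
        have hs : xm + y ∈ L ∪ A := by
          rw [hSXY]; exact Finset.add_mem_add hxmX hy
        rcases le_or_gt (xm + y) (ℓ * q) with h | h
        · exact Or.inr h
        · left
          have hmem : xm + y ∈ A := hbig _ hs h
          have := hsing _ hmem _ hsumA
          omega
      have dichX : ∀ x ∈ X, x = xm ∨ ym + x ≤ ℓ * q := by
        intro x hx
        have hs : x + ym ∈ L ∪ A := by
          rw [hSXY]; exact Finset.add_mem_add hx hymY
        rcases le_or_gt (x + ym) (ℓ * q) with h | h
        · exact Or.inr (by omega)
        · left
          have hmem : x + ym ∈ A := hbig _ hs h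
          have := hsing _ hmem _ hsumA
          omega
      -- the element q * (ℓ - k + 1)
      have htS : q * (ℓ - k + 1) ∈ L ∪ A :=
        Finset.mem_union_left _ ((hmemL _).2 ⟨ℓ - k + 1, by omega, rfl⟩)
      rw [hSXY] at htS
      obtain ⟨x, hxX, y, hyY, hxy⟩ := Finset.mem_add.1 htS
      have hqmono : ∀ i j : ℕ, q * i ≤ q * j → i ≤ j := by
        intro i j h
        exact Nat.le_of_mul_le_mul_left h hq
      rcases dichX x hxX with rfl | hxb
      · -- x = xm, so u ≤ ℓ - k + 1
        have h1 : q * u ≤ q * (ℓ - k + 1) := by omega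
        have h2 : u ≤ ℓ - k + 1 := hqmono _ _ h1
        omega
      · rcases dichY y hyY with rfl | hyb
        · have h1 : q * v ≤ q * (ℓ - k + 1) := by omega
          have h2 : v ≤ ℓ - k + 1 := hqmono _ _ h1
          omega
        · exfalso
          -- (ym + x) + (xm + y) ≤ 2ℓq but equals a0 + q*(ℓ-k+1) > 2ℓq
          have h1 : xm + ym + (x + y) ≤ ℓ * q + ℓ * q := by omega
          have h2 : xm + ym = q * (u + v) := by
            rw [Nat.mul_add, hxu, hyv]
          have h3 : q * (u + v) + q * (ℓ - k + 1) = q * (2 * ℓ + 1) := by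
            rw [← Nat.mul_add]
            congr 1
            omega
          have h4 : q * (2 * ℓ + 1) ≤ q * (2 * ℓ) := by
            have h5 : ℓ * q + ℓ * q = q * (2 * ℓ) := by ring
            omega
          have h6 : 2 * ℓ + 1 ≤ 2 * ℓ := hqmono _ _ h4
          omega
    · -- A = {(ℓ + k) * q}
      rw [hAeq]
      congr 1
      have h1 : (ℓ + k) * q = q * (u + v) := by
        rw [mul_comm]
        congr 1
        omega
      rw [h1, Nat.mul_add, hxu, hyv, hsum]
  · -- backward direction
    rintro ⟨k, hk1, hk2, hAeq⟩
    intro hatom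
    obtain ⟨-, -, hfac⟩ := hatom
    have hkℓ : k ≤ ℓ := by omega
    set X : Finset ℕ := {0, q * k} with hXdef
    set Y : Finset ℕ := (Finset.range (ℓ - k + 1)).image (fun i => q * i) ∪ {q * ℓ}
      with hYdef
    have hX0 : (0:ℕ) ∈ X := by simp [hXdef]
    have hY0 : (0:ℕ) ∈ Y := by
      simp only [hYdef, Finset.mem_union, Finset.mem_image, Finset.mem_range]
      exact Or.inl ⟨0, by omega, by ring⟩
    have hfeq : L ∪ A = X + Y := by
      rw [hAeq]
      ext n
      simp only [hLdef, hXdef, hYdef, Finset.mem_union, Finset.mem_image,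
        Finset.mem_range, Finset.mem_singleton, Finset.mem_add, Finset.mem_insert,
        Nat.lt_succ_iff]
      constructor
      · rintro (⟨i, hi, rfl⟩ | rfl)
        · by_cases hik : i ≤ ℓ - k
          · exact ⟨0, Or.inl rfl, q * i, Or.inl ⟨i, by omega, rfl⟩, by ring⟩
          · refine ⟨q * k, Or.inr rfl, q * (i - k), Or.inl ⟨i - k, by omega, rfl⟩, ?_⟩
            rw [← Nat.mul_add]
            congr 1
            omega
        · refine ⟨q * k, Or.inr rfl, q * ℓ, Or.inr rfl, ?_⟩
          rw [← Nat.mul_add, mul_comm]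
          congr 1
          omega
      · rintro ⟨x, hx, y, hy, rfl⟩
        rcases hx with rfl | rfl <;> rcases hy with ⟨j, hj, rfl⟩ | rfl
        · exact Or.inl ⟨j, by omega, by ring⟩
        · exact Or.inl ⟨ℓ, le_refl ℓ, by ring⟩
        · exact Or.inl ⟨k + j, by omega, by rw [← Nat.mul_add]⟩
        · right
          rw [← Nat.mul_add, mul_comm]
          congr 1
          omega
    rcases hfac X Y hX0 hY0 hfeq with h | h
    · have : q * k ∈ ({0} : Finset ℕ) := h ▸ (by simp [hXdef])
      have := Finset.mem_singleton.1 this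
      have : 0 < q * k := Nat.mul_pos hq (by omega)
      omega
    · have : q * ℓ ∈ ({0} : Finset ℕ) := h ▸
        (Finset.mem_union_right _ (Finset.mem_singleton_self _))
      have := Finset.mem_singleton.1 this
      have : 0 < q * ℓ := Nat.mul_pos hq hℓ
      omega
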